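/- arXiv:1804.10880 — 2 statements merged into one kernel-verified Lean document; each statement's English description precedes it below -/
import Mathlib

section
/- Let L(t) = (1-t)\cos(\pi/(1-t)) for t \in [0,1) and L(t)=0 for t \in [1,2], and let U(t) = L(t) + (1-t)/2 for t \in [0,1) and U(t)=1 for t\in[1,2). Then for every function Y : [0,2] \to \mathbb{R} with L(t) \le Y(t) \le U(t) for all t \in [0,2], the total variation of Y on [0,1] is infinite. -/
open Real Set

/-- The lower barrier from Example 3.1. -/
noncomputable def L₁ (t : ℝ) : ℝ :=
  if t < 1 then (1 - t) * Real.cos (Real.pi / (1 - t)) else 0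

/-- The upper barrier from Example 3.1. -/
noncomputable def U₁ (t : ℝ) : ℝ :=
  if t < 1 then L₁ t + (1 - t) / 2 else 1

lemma L1_eval (m : ℕ) (hm : 1 ≤ m) : L₁ (1 - 1/m) = (1/m) * (-1)^m := by
  have hmp : (0:ℝ) < m := by exact_mod_cast hm
  have h1 : (1:ℝ) - 1/m < 1 := by
    have : (0:ℝ) < 1/m := by positivity
    linarith
  have h2 : (1:ℝ) - (1 - 1/m) = 1/m := by ring
  rw [L₁, if_pos h1, h2]
  congr 1
  have : Real.pi / (1/(m:ℝ)) = m * Real.pi := by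
    field_simp
  rw [this]
  have := Real.cos_nat_mul_pi_sub 0 m
  simpa using this

/-- Any function squeezed between the barriers `L₁` and `U₁` on `[0,2]` has
infinite total variation on `[0,1]`. -/
theorem stmt_1 (Y : ℝ → ℝ)
    (hY : ∀ t ∈ Set.Icc (0 : ℝ) 2, L₁ t ≤ Y t ∧ Y t ≤ U₁ t) :
    eVariationOn Y (Set.Icc (0 : ℝ) 1) = ⊤ := by
  -- the sequence of points
  set u : ℕ → ℝ := fun n => 1 - 1/(n+2) with hu
  have humem : ∀ n, u n ∈ Set.Icc (0:ℝ) 1 := by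
    intro n
    have h2 : (0:ℝ) < (n:ℝ)+2 := by positivity
    constructor
    · have : 1/((n:ℝ)+2) ≤ 1 := by
        rw [div_le_one h2]; linarith
      simp only [hu]; linarith
    · have : (0:ℝ) < 1/((n:ℝ)+2) := by positivity
      simp only [hu]; linarith
  have humono : Monotone u := by
    intro a b hab
    have ha : (0:ℝ) < (a:ℝ)+2 := by positivity
    have hb : (0:ℝ) < (b:ℝ)+2 := by positivity
    have : 1/((b:ℝ)+2) ≤ 1/((a:ℝ)+2) := by
      apply one_div_le_one_div_of_le ha
      have : (a:ℝ) ≤ b := by exact_mod_cast hab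
      linarith
    simp only [hu]; linarith
  -- lower bounds at even indices, upper bounds at odd indices
  have hYmem : ∀ m : ℕ, 1 ≤ m → L₁ (1 - 1/m) ≤ Y (1 - 1/m) ∧ Y (1 - 1/m) ≤ U₁ (1 - 1/m) := by
    intro m hm
    apply hY
    have hmp : (0:ℝ) < m := by exact_mod_cast hm
    have h1 : 1/(m:ℝ) ≤ 1 := by rw [div_le_one hmp]; exact_mod_cast hm
    have h2 : (0:ℝ) < 1/m := by positivity
    simp only [Set.mem_Icc]
    constructor <;> linarith
  have heven : ∀ m : ℕ, 1 ≤ m → Even m → (1:ℝ)/m ≤ Y (1 - 1/m) := by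
    intro m hm hme
    have := (hYmem m hm).1
    rw [L1_eval m hm, hme.neg_one_pow] at this
    linarith
  have hodd : ∀ m : ℕ, 1 ≤ m → Odd m → Y (1 - 1/m) ≤ -(1/(2*m)) := by
    intro m hm hmo
    have hmp : (0:ℝ) < m := by exact_mod_cast hm
    have h1 : (1:ℝ) - 1/m < 1 := by
      have : (0:ℝ) < 1/m := by positivity
      linarith
    have := (hYmem m hm).2
    rw [U₁, if_pos h1, L1_eval m hm, hmo.neg_one_pow] at this
    have h2 : (1:ℝ) - (1 - 1/m) = 1/m := by ring
    rw [h2] at this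
    have : Y (1 - 1/m) ≤ 1/m * (-1) + (1/m)/2 := this
    have he : (1:ℝ)/m * (-1) + (1/m)/2 = -(1/(2*m)) := by
      field_simp; ring
    linarith [he ▸ this]
  -- jump lemma
  have hjump : ∀ m : ℕ, 1 ≤ m → (1:ℝ)/(2*m) ≤ |Y (1 - 1/(m+1)) - Y (1 - 1/m)| := by
    intro m hm
    have hmp : (0:ℝ) < m := by exact_mod_cast hm
    have hcast : ((m+1 : ℕ) : ℝ) = (m:ℝ) + 1 := by push_cast; ring
    rcases Nat.even_or_odd m with hme | hmo
    · have h1 := heven m hm hme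
      have h2 := hodd (m+1) (by omega) (Even.add_one hme)
      rw [hcast] at h2
      have : Y (1 - 1/(m+1)) - Y (1 - 1/m) ≤ -(1/(2*((m:ℝ)+1))) - 1/m := by linarith
      have habs : (1:ℝ)/(2*m) ≤ -(Y (1 - 1/((m:ℝ)+1)) - Y (1 - 1/m)) := by
        have hp : (0:ℝ) < 2*((m:ℝ)+1) := by positivity
        have : (0:ℝ) < 1/(2*((m:ℝ)+1)) := by positivity
        have h3 : (1:ℝ)/(2*m) ≤ 1/m := by
          rw [div_le_div_iff₀ (by positivity) hmp]; nlinarith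
        linarith
      calc (1:ℝ)/(2*m) ≤ -(Y (1 - 1/((m:ℝ)+1)) - Y (1 - 1/m)) := habs
        _ ≤ |Y (1 - 1/((m:ℝ)+1)) - Y (1 - 1/m)| := neg_le_abs _
    · have h1 := hodd m hm hmo
      have h2 := heven (m+1) (by omega) (Odd.add_one hmo)
      rw [hcast] at h2
      have habs : (1:ℝ)/(2*m) ≤ Y (1 - 1/((m:ℝ)+1)) - Y (1 - 1/m) := by
        have h3 : (0:ℝ) < 1/((m:ℝ)+1) := by positivity
        linarith
      calc (1:ℝ)/(2*m) ≤ Y (1 - 1/((m:ℝ)+1)) - Y (1 - 1/m) := habs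
        _ ≤ |Y (1 - 1/((m:ℝ)+1)) - Y (1 - 1/m)| := le_abs_self _
  -- edist bound along u
  have hedist : ∀ j : ℕ, ENNReal.ofReal (1/(2*((j:ℝ)+2))) ≤ edist (Y (u (j+1))) (Y (u j)) := by
    intro j
    have hcast : ((j+2 : ℕ) : ℝ) = (j:ℝ) + 2 := by push_cast; ring
    have := hjump (j+2) (by omega)
    rw [hcast] at this
    rw [edist_dist, Real.dist_eq]
    apply ENNReal.ofReal_le_ofReal
    have he1 : u (j+1) = 1 - 1/(((j:ℝ)+2)+1) := by simp only [hu]; push_cast; ring_nf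
    have he2 : u j = 1 - 1/((j:ℝ)+2) := by simp only [hu]
    rw [he1, he2]
    exact this
  -- partial sums of edist below eVariationOn
  have hsumle : ∀ n : ℕ, ∑ j ∈ Finset.range n, ENNReal.ofReal (1/(2*((j:ℝ)+2)))
      ≤ eVariationOn Y (Set.Icc (0:ℝ) 1) := by
    intro n
    calc ∑ j ∈ Finset.range n, ENNReal.ofReal (1/(2*((j:ℝ)+2)))
        ≤ ∑ j ∈ Finset.range n, edist (Y (u (j+1))) (Y (u j)) :=
          Finset.sum_le_sum fun j _ => hedist j
      _ ≤ eVariationOn Y (Set.Icc (0:ℝ) 1) := eVariationOn.sum_le (f := Y) (n := n) humono humem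
  -- divergence
  apply ENNReal.eq_top_of_forall_nnreal_le
  intro r
  -- find n with real sum ≥ r
  have hdiv : Filter.Tendsto (fun n => ∑ j ∈ Finset.range n, (1:ℝ)/(2*((j:ℝ)+2)))
      Filter.atTop Filter.atTop := by
    have h1 : ∀ n, (1/4 : ℝ) * ∑ j ∈ Finset.range n, 1/((j:ℝ)+1)
        ≤ ∑ j ∈ Finset.range n, (1:ℝ)/(2*((j:ℝ)+2)) := by
      intro n
      rw [Finset.mul_sum]
      apply Finset.sum_le_sum
      intro j _
      rw [show (1/4:ℝ)*(1/((j:ℝ)+1)) = 1/(4*((j:ℝ)+1)) by field_simp,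
        div_le_div_iff₀ (by positivity) (by positivity)]
      nlinarith [Nat.cast_nonneg (α := ℝ) j]
    apply Filter.tendsto_atTop_mono h1
    exact (Real.tendsto_sum_range_one_div_nat_succ_atTop).const_mul_atTop (by norm_num)
  obtain ⟨n, hn⟩ := (Filter.tendsto_atTop.1 hdiv (r:ℝ)).exists
  calc (r : ENNReal) = ENNReal.ofReal (r:ℝ) := ENNReal.ofReal_coe_nnreal.symm
    _ ≤ ENNReal.ofReal (∑ j ∈ Finset.range n, (1:ℝ)/(2*((j:ℝ)+2))) := ENNReal.ofReal_le_ofReal hn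
    _ = ∑ j ∈ Finset.range n, ENNReal.ofReal ((1:ℝ)/(2*((j:ℝ)+2))) := by
        rw [ENNReal.ofReal_sum_of_nonneg]
        intro j _; positivity
    _ ≤ eVariationOn Y (Set.Icc (0:ℝ) 1) := hsumle n
end

section
/- Let L(t) = -t for t \in [0,1) and L(t) = 0 for t \in [1,2]; let U(t) = t for t \in [0,1) and U(t) = 0 for t \in [1,2]. For every r \in (0,1), the function Y^r defined by Y^r(t) = t for t \in [0,r), Y^r(t) = r for t \in [r,1), and Y^r(t) = 0 for t \in [1,2] satisfies: (i) L(t) \le Y^r(t) \le U(t) for all t \in [0,2]; (ii) Y^r is nondecreasing on [0,1), hence of bounded variation on [0,2]; (iii) Y^r(2) = 0. Consequently, for distinct r, r' \in (0,1), Y^r \ne Y^{r'}. -/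
open Set

/-- Lower barrier of Example 3.2. -/
noncomputable def L₃ (t : ℝ) : ℝ := if t < 1 then -t else 0

/-- Upper barrier of Example 3.2. -/
noncomputable def U₃ (t : ℝ) : ℝ := if t < 1 then t else 0

/-- The family of candidate solutions of Example 3.2. -/
noncomputable def Y₃ (r t : ℝ) : ℝ := if t < r then t else if t < 1 then r else 0

/-- Variation of a sum is at most the sum of variations. -/
lemma evar_add_le (f g : ℝ → ℝ) (s : Set ℝ) :
    eVariationOn (fun t => f t + g t) s ≤ eVariationOn f s + eVariationOn g s := by
  rw [eVariationOn]
  apply iSup_le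
  rintro ⟨n, u, hu, us⟩
  calc ∑ i ∈ Finset.range n, edist (f (u (i+1)) + g (u (i+1))) (f (u i) + g (u i))
      ≤ ∑ i ∈ Finset.range n,
          (edist (f (u (i+1))) (f (u i)) + edist (g (u (i+1))) (g (u i))) :=
        Finset.sum_le_sum fun i _ => edist_add_add_le _ _ _ _
    _ = (∑ i ∈ Finset.range n, edist (f (u (i+1))) (f (u i)))
        + ∑ i ∈ Finset.range n, edist (g (u (i+1))) (g (u i)) := Finset.sum_add_distrib
    _ ≤ eVariationOn f s + eVariationOn g s :=
        add_le_add (eVariationOn.sum_le (f := f) (n := n) hu us) (eVariationOn.sum_le (f := g) (n := n) hu us)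

/-- Variation is invariant under negation. -/
lemma evar_neg (f : ℝ → ℝ) (s : Set ℝ) :
    eVariationOn (fun t => -f t) s = eVariationOn f s := by
  rw [eVariationOn, eVariationOn]
  congr 1 with p : 1
  congr 1 with i : 1
  exact edist_neg_neg _ _

/-- For every `r ∈ (0,1)`: (i) `Y₃ r` lies between the barriers on `[0,2]`;
(ii) `Y₃ r` is nondecreasing on `[0,1)` and of bounded variation on `[0,2]`;
(iii) `Y₃ r 2 = 0`.  Moreover distinct `r`'s give distinct functions. -/
theorem stmt_3 :
    (∀ r ∈ Set.Ioo (0 : ℝ) 1,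
      (∀ t ∈ Set.Icc (0 : ℝ) 2, L₃ t ≤ Y₃ r t ∧ Y₃ r t ≤ U₃ t) ∧
      MonotoneOn (Y₃ r) (Set.Ico (0 : ℝ) 1) ∧
      eVariationOn (Y₃ r) (Set.Icc (0 : ℝ) 2) < ⊤ ∧
      Y₃ r 2 = 0) ∧
    (∀ r ∈ Set.Ioo (0 : ℝ) 1, ∀ r' ∈ Set.Ioo (0 : ℝ) 1, r ≠ r' → Y₃ r ≠ Y₃ r') := by
  constructor
  · rintro r ⟨hr0, hr1⟩
    refine ⟨?_, ?_, ?_, ?_⟩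
    · -- barriers
      rintro t ⟨ht0, ht2⟩
      unfold L₃ U₃ Y₃
      by_cases h1 : t < 1
      · by_cases h2 : t < r
        · simp only [h1, h2, if_true]
          constructor <;> linarith
        · simp only [h1, h2, if_true, if_false]
          push_neg at h2
          constructor <;> linarith
      · have h2 : ¬ t < r := by push_neg at h1 ⊢; linarith
        simp [h1, h2]
    · -- monotone on [0,1)
      have key : ∀ t ∈ Set.Ico (0 : ℝ) 1, Y₃ r t = min t r := by
        rintro t ⟨ht0, ht1⟩
        unfold Y₃
        by_cases h2 : t < r
        · simp [h2, min_eq_left h2.le]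
        · push_neg at h2
          simp [not_lt.2 h2, ht1, min_eq_right h2]
      intro x hx y hy hxy
      rw [key x hx, key y hy]
      exact min_le_min hxy le_rfl
    · -- bounded variation
      set f : ℝ → ℝ := fun t => min t r with hf
      set g : ℝ → ℝ := fun t => if t < 1 then 0 else -r with hg
      have heq : Y₃ r = fun t => f t + g t := by
        funext t
        unfold Y₃
        simp only [hf, hg]
        by_cases h2 : t < r
        · have h1 : t < 1 := lt_trans h2 hr1
          simp [h1, h2, min_eq_left h2.le]
        · push_neg at h2
          by_cases h1 : t < 1
          · simp [h1, not_lt.2 h2, min_eq_right h2]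
          · have h2' : ¬ t < r := not_lt.2 h2
            simp [h1, h2', min_eq_right (by push_neg at h1; linarith : r ≤ t)]
      have hfm : Monotone f := fun a b hab => min_le_min hab le_rfl
      have hgm : Monotone (fun t => -g t) := by
        intro a b hab
        simp only [hg]
        by_cases ha : a < 1
        · by_cases hb : b < 1
          · simp [ha, hb]
          · simp [ha, hb]; linarith
        · have hb : ¬ b < 1 := by push_neg at ha ⊢; linarith
          simp [ha, hb]
      have hfv : eVariationOn f (Set.Icc (0:ℝ) 2) ≠ ⊤ := by
        have := (hfm.monotoneOn (Set.Icc (0:ℝ) 2)).locallyBoundedVariationOn 0 2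
          (by simp) (by norm_num)
        rw [Set.inter_self] at this
        exact this
      have hgv : eVariationOn g (Set.Icc (0:ℝ) 2) ≠ ⊤ := by
        have := (hgm.monotoneOn (Set.Icc (0:ℝ) 2)).locallyBoundedVariationOn 0 2
          (by simp) (by norm_num)
        rw [Set.inter_self] at this
        unfold BoundedVariationOn at this
        rwa [evar_neg g] at this
      rw [heq, lt_top_iff_ne_top]
      intro htop
      have := lt_of_le_of_lt (evar_add_le f g (Set.Icc (0:ℝ) 2))
        (by rw [← lt_top_iff_ne_top] at hfv hgv; exact ENNReal.add_lt_top.2 ⟨hfv, hgv⟩)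
      rw [htop] at this
      exact (lt_irrefl _ this)
    · -- terminal value
      unfold Y₃
      have : ¬ (2:ℝ) < r := by push_neg; linarith
      norm_num [this]
  · -- distinctness
    rintro r ⟨hr0, hr1⟩ r' ⟨hr0', hr1'⟩ hne hEq
    rcases lt_or_gt_of_ne hne with h | h
    · have := congrFun hEq r'
      unfold Y₃ at this
      simp [not_lt.2 h.le, hr1', lt_irrefl] at this
      exact hne this
    · have := congrFun hEq r
      unfold Y₃ at this
      simp [not_lt.2 h.le, hr1, lt_irrefl] at this
      exact hne this
end
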